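/- Let Z be a nonnegative càdlàg supermartingale and X a continuous process with |X_t − b| bounded near times when X hits the finite value b, such that Z·|X − b| is a nonnegative local martingale. If Z is strictly positive, then once X hits b, X stays at b afterwards almost surely (b is absorbing). -/

import Mathlib

open MeasureTheory Set Filter

variable {Ω : Type*} {m : MeasurableSpace Ω}

lemma nnreal_coe_nnrat (q : ℚ≥0) : ((q : NNReal) : ℝ) = (q : ℝ) :=
  map_nnratCast NNReal.toRealHom q

lemma exists_nnrat_btwn' (s : NNReal) {e : ℝ} (he : 0 < e) :
    ∃ q : ℚ≥0, s < (q : NNReal) ∧ ((q : NNReal) : ℝ) < (s : ℝ) + e := by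
  obtain ⟨p, hp1, hp2⟩ := exists_rat_btwn (lt_add_of_pos_right (s : ℝ) he)
  have hp0 : 0 ≤ p := by exact_mod_cast (s.coe_nonneg.trans hp1.le)
  have hc : ((p.toNNRat : NNReal) : ℝ) = (p : ℝ) := by
    rw [nnreal_coe_nnrat]; exact_mod_cast Rat.coe_toNNRat p hp0
  exact ⟨p.toNNRat, by rw [← NNReal.coe_lt_coe, hc]; exact hp1, by rw [hc]; exact hp2⟩

lemma keyA (μ : Measure Ω) [IsProbabilityMeasure μ] (ℱ : Filtration NNReal m)
    (Y : NNReal → Ω → ℝ) (hY0 : ∀ t ω, 0 ≤ Y t ω) (hYadapted : Adapted ℱ Y)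
    (τ : Ω → NNReal) (hτ : IsStoppingTime ℱ (fun ω => (τ ω : WithTop NNReal)))
    (hM : Martingale (MeasureTheory.stoppedProcess Y (fun ω => (τ ω : WithTop NNReal))) ℱ μ)
    (r : NNReal) {ε : ℝ} (hε : 0 < ε) (Q : Finset ℚ≥0) (hQ : ∀ q ∈ Q, (q : NNReal) ≤ r) :
    μ.withDensity (fun ω => ENNReal.ofReal (Y r ω))
      ((⋃ q ∈ Q, {ω | Y (q : NNReal) ω ≤ ε}) ∩ {ω | r ≤ τ ω}) ≤ ENNReal.ofReal ε := by
  classical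
  set ν := μ.withDensity (fun ω => ENNReal.ofReal (Y r ω)) with hν
  set E : ℚ≥0 → Set Ω := fun q =>
    {ω | Y (q : NNReal) ω ≤ ε} ∩ ⋂ q' ∈ Q, ⋂ (_ : q' < q), {ω | ε < Y (q' : NNReal) ω} with hE
  have hEmem : ∀ q ω, ω ∈ E q ↔
      (Y (q : NNReal) ω ≤ ε ∧ ∀ q' ∈ Q, q' < q → ε < Y (q' : NNReal) ω) := by
    intro q ω
    simp [hE, Set.mem_iInter, Set.mem_setOf_eq]
  -- measurability of E q in ℱ q
  have hYq : ∀ q : NNReal, Measurable[ℱ q] (Y q) := fun q => hYadapted q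
  have hτge : ∀ i : NNReal, MeasurableSet[ℱ i] {ω | i ≤ τ ω} := fun i => by
    have h := hτ.measurableSet_ge i
    have he : {ω | ((i : WithTop NNReal)) ≤ (τ ω : WithTop NNReal)} = {ω | i ≤ τ ω} := by
      ext ω; simp only [Set.mem_setOf_eq, WithTop.coe_le_coe]
    rwa [he] at h
  have hEmeas : ∀ q ∈ Q, MeasurableSet[ℱ (q : NNReal)] (E q) := by
    intro q _
    refine MeasurableSet.inter (hYq _ measurableSet_Iic) ?_
    refine MeasurableSet.biInter Q.countable_toSet (fun q' _ => ?_)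
    refine MeasurableSet.iInter (fun hq' => ?_)
    have : ((q' : NNReal)) ≤ (q : NNReal) := by exact_mod_cast hq'.le
    exact ℱ.mono this _ (hYq _ measurableSet_Ioi)
  -- B and C
  set B : ℚ≥0 → Set Ω := fun q => E q ∩ {ω | (q : NNReal) ≤ τ ω} with hB
  set C : ℚ≥0 → Set Ω := fun q => E q ∩ {ω | r ≤ τ ω} with hC
  have hBmeas : ∀ q ∈ Q, MeasurableSet[ℱ (q : NNReal)] (B q) := fun q hq =>
    (hEmeas q hq).inter (hτge _)
  have hBmeas' : ∀ q ∈ Q, MeasurableSet (B q) := fun q hq => ℱ.le _ _ (hBmeas q hq)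
  have hCmeas : ∀ q ∈ Q, MeasurableSet (C q) := fun q hq =>
    (ℱ.le _ _ (hEmeas q hq)).inter (ℱ.le r _ (hτge r))
  have hCB : ∀ q ∈ Q, C q = B q ∩ {ω | r ≤ τ ω} := by
    intro q hq
    ext ω
    simp only [hC, hB, Set.mem_inter_iff, Set.mem_setOf_eq]
    exact ⟨fun ⟨h1, h2⟩ => ⟨⟨h1, le_trans (hQ q hq) h2⟩, h2⟩, fun ⟨⟨h1, _⟩, h2⟩ => ⟨h1, h2⟩⟩
  -- disjointness of E (hence B) on Q
  have hEdisj : (Q : Set ℚ≥0).PairwiseDisjoint E := by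
    intro q1 h1 q2 h2 hne
    rw [Function.onFun, Set.disjoint_left]
    intro ω hω1 hω2
    rcases lt_or_gt_of_ne hne with h | h
    · exact absurd ((hEmem q1 ω).1 hω1).1 (not_le.2 (((hEmem q2 ω).1 hω2).2 q1 h1 h))
    · exact absurd ((hEmem q2 ω).1 hω2).1 (not_le.2 (((hEmem q1 ω).1 hω1).2 q2 h2 h))
  have hBdisj : (Q : Set ℚ≥0).PairwiseDisjoint B := fun q1 h1 q2 h2 hne =>
    Disjoint.mono Set.inter_subset_left Set.inter_subset_left (hEdisj h1 h2 hne)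
  -- union identity
  have hUnion : (⋃ q ∈ Q, {ω | Y (q : NNReal) ω ≤ ε}) = ⋃ q ∈ Q, E q := by
    apply Set.Subset.antisymm
    · intro ω hω
      simp only [Set.mem_iUnion, Set.mem_setOf_eq] at hω
      obtain ⟨q0, hq0, hY⟩ := hω
      set F := Q.filter (fun q : ℚ≥0 => Y ((q : NNReal)) ω ≤ ε) with hF
      have hFne : F.Nonempty := ⟨q0, Finset.mem_filter.2 ⟨hq0, hY⟩⟩
      set qm := F.min' hFne with hqm
      have hqmF : qm ∈ F := F.min'_mem hFne
      rw [Finset.mem_filter] at hqmF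
      refine Set.mem_iUnion.2 ⟨qm, Set.mem_iUnion.2 ⟨hqmF.1, (hEmem qm ω).2 ⟨hqmF.2, ?_⟩⟩⟩
      intro q' hq' hlt
      by_contra hcon
      push_neg at hcon
      exact absurd (F.min'_le q' (Finset.mem_filter.2 ⟨hq', hcon⟩)) (not_le.2 hlt)
    · exact Set.iUnion₂_mono fun q _ => Set.inter_subset_left
  -- per q bound
  have hperq : ∀ q ∈ Q, ν (C q) ≤ ENNReal.ofReal ε * μ (B q) := by
    intro q hq
    have hint := hM.setIntegral_eq (hQ q hq) (hBmeas q hq)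
    -- LHS ≤ ε μ(B q)
    have h1 : ∫ ω in B q, MeasureTheory.stoppedProcess Y (fun ω => (τ ω : WithTop NNReal)) (q : NNReal) ω ∂μ
        ≤ ε * (μ (B q)).toReal := by
      have hbd : ∀ ω ∈ B q, MeasureTheory.stoppedProcess Y (fun ω => (τ ω : WithTop NNReal)) (q : NNReal) ω ≤ ε := by
        intro ω hω
        have h2 : min (q : NNReal) (τ ω) = (q : NNReal) := min_eq_left hω.2
        rw [stoppedProcess_eq_of_le (by exact_mod_cast hω.2)]
        exact ((hEmem q ω).1 hω.1).1
      calc ∫ ω in B q, MeasureTheory.stoppedProcess Y (fun ω => (τ ω : WithTop NNReal)) (q : NNReal) ω ∂μ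
          ≤ ∫ _ω in B q, ε ∂μ := by
            refine setIntegral_mono_on ((hM.integrable _).integrableOn)
              integrableOn_const (hBmeas' q hq) hbd
        _ = ε * (μ (B q)).toReal := by rw [setIntegral_const, smul_eq_mul, mul_comm, measureReal_def]
    -- ∫ over C q of Y r ≤ ∫ over B q of stopped r
    have hsp0 : ∀ ω, 0 ≤ MeasureTheory.stoppedProcess Y (fun ω => (τ ω : WithTop NNReal)) r ω := fun ω => hY0 _ _
    have hCeq : ∀ ω ∈ C q, Y r ω = MeasureTheory.stoppedProcess Y (fun ω => (τ ω : WithTop NNReal)) r ω := by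
      intro ω hω
      rw [stoppedProcess_eq_of_le (by exact_mod_cast hω.2)]
    have h2 : ∫ ω in C q, Y r ω ∂μ ≤ ∫ ω in B q, MeasureTheory.stoppedProcess Y (fun ω => (τ ω : WithTop NNReal)) r ω ∂μ := by
      rw [setIntegral_congr_fun (hCmeas q hq) hCeq]
      refine setIntegral_mono_set ((hM.integrable _).integrableOn)
        (Filter.Eventually.of_forall fun ω => hsp0 ω) (Filter.Eventually.of_forall ?_)
      rw [hCB q hq]
      exact Set.inter_subset_left
    -- ν (C q)
    have hICq : IntegrableOn (Y r) (C q) μ := by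
      refine (((hM.integrable r).integrableOn) :
        IntegrableOn (MeasureTheory.stoppedProcess Y (fun ω => (τ ω : WithTop NNReal)) r) (C q) μ).congr_fun
        (fun ω hω => (hCeq ω hω).symm) (hCmeas q hq)
    have hνC : ν (C q) = ENNReal.ofReal (∫ ω in C q, Y r ω ∂μ) := by
      rw [hν, withDensity_apply _ (hCmeas q hq),
        ← ofReal_integral_eq_lintegral_ofReal hICq
          (Filter.Eventually.of_forall fun ω => hY0 _ _)]
    rw [hνC]
    calc ENNReal.ofReal (∫ ω in C q, Y r ω ∂μ)
        ≤ ENNReal.ofReal (ε * (μ (B q)).toReal) :=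
          ENNReal.ofReal_le_ofReal (le_trans h2 (le_trans (le_of_eq hint.symm) h1))
      _ = ENNReal.ofReal ε * ENNReal.ofReal ((μ (B q)).toReal) :=
          ENNReal.ofReal_mul hε.le
      _ = ENNReal.ofReal ε * μ (B q) := by rw [ENNReal.ofReal_toReal (measure_ne_top _ _)]
  -- sum up
  rw [hUnion, Set.iUnion₂_inter]
  have : ∀ q ∈ Q, E q ∩ {ω | r ≤ τ ω} = C q := fun q hq => rfl
  calc ν (⋃ q ∈ Q, E q ∩ {ω | r ≤ τ ω}) ≤ ∑ q ∈ Q, ν (E q ∩ {ω | r ≤ τ ω}) :=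
        measure_biUnion_finset_le Q _
    _ = ∑ q ∈ Q, ν (C q) := by rfl
    _ ≤ ∑ q ∈ Q, ENNReal.ofReal ε * μ (B q) := Finset.sum_le_sum hperq
    _ = ENNReal.ofReal ε * ∑ q ∈ Q, μ (B q) := by rw [Finset.mul_sum]
    _ = ENNReal.ofReal ε * μ (⋃ q ∈ Q, B q) := by rw [measure_biUnion_finset hBdisj hBmeas']
    _ ≤ ENNReal.ofReal ε * 1 := by
        refine mul_le_mul_right (le_trans (measure_mono (Set.subset_univ _)) ?_) _
        simp
    _ = ENNReal.ofReal ε := mul_one _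

lemma keyC (μ : Measure Ω) [IsProbabilityMeasure μ] (ℱ : Filtration NNReal m)
    (Y : NNReal → Ω → ℝ) (hY0 : ∀ t ω, 0 ≤ Y t ω) (hYadapted : Adapted ℱ Y)
    (τ : ℕ → Ω → NNReal) (hτstop : ∀ n, IsStoppingTime ℱ (fun ω => (τ n ω : WithTop NNReal)))
    (hτmart : ∀ n, Martingale (MeasureTheory.stoppedProcess Y (fun ω => (τ n ω : WithTop NNReal))) ℱ μ)
    (hτtend : ∀ᵐ ω ∂μ, Tendsto (fun n => τ n ω) atTop atTop)
    (r : NNReal) {ε : ℝ} (hε : 0 < ε) :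
    μ.withDensity (fun ω => ENNReal.ofReal (Y r ω))
      (⋃ q : ℚ≥0, ⋃ (_ : (q : NNReal) < r), {ω | Y (q : NNReal) ω ≤ ε})
      ≤ ENNReal.ofReal ε := by
  classical
  set ν := μ.withDensity (fun ω => ENNReal.ofReal (Y r ω)) with hν
  -- Step B : for a fixed finset
  have stepB : ∀ Q : Finset ℚ≥0, (∀ q ∈ Q, (q : NNReal) ≤ r) →
      ν (⋃ q ∈ Q, {ω | Y (q : NNReal) ω ≤ ε}) ≤ ENNReal.ofReal ε := by
    intro Q hQ
    set U := ⋃ q ∈ Q, {ω | Y (q : NNReal) ω ≤ ε} with hU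
    set D : ℕ → Set Ω := fun n => ⋂ (k : ℕ) (_ : n ≤ k), {ω | r ≤ τ k ω} with hD
    have hDmono : Monotone D := by
      intro n1 n2 h12
      exact Set.iInter₂_mono' fun k hk => ⟨k, le_trans h12 hk, subset_rfl⟩
    have hsub : ∀ n, U ∩ D n ⊆ U ∩ {ω | r ≤ τ n ω} := fun n =>
      Set.inter_subset_inter subset_rfl (Set.iInter₂_subset n le_rfl)
    have hbound : ∀ n, ν (U ∩ D n) ≤ ENNReal.ofReal ε := fun n =>
      le_trans (measure_mono (hsub n)) (keyA μ ℱ Y hY0 hYadapted (τ n) (hτstop n)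
        (hτmart n) r hε Q hQ)
    have hdir : Directed (· ⊆ ·) (fun n => U ∩ D n) :=
      (Monotone.directed_le fun n1 n2 h => Set.inter_subset_inter subset_rfl (hDmono h))
    have hmeasU : ν (⋃ n, U ∩ D n) ≤ ENNReal.ofReal ε := by
      rw [hdir.measure_iUnion]
      exact iSup_le hbound
    -- null part
    have hN : μ {ω | ¬ Tendsto (fun n => τ n ω) atTop atTop} = 0 := by
      rw [← ae_iff] at *
      exact hτtend
    have hνN : ν {ω | ¬ Tendsto (fun n => τ n ω) atTop atTop} = 0 :=
      (withDensity_absolutelyContinuous μ _) hN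
    have hcover : U ⊆ (⋃ n, U ∩ D n) ∪ {ω | ¬ Tendsto (fun n => τ n ω) atTop atTop} := by
      intro ω hω
      by_cases ht : Tendsto (fun n => τ n ω) atTop atTop
      · left
        obtain ⟨n, hn⟩ := (tendsto_atTop.1 ht r).exists_forall_of_atTop
        exact Set.mem_iUnion.2 ⟨n, hω, Set.mem_iInter₂.2 fun k hk => hn k hk⟩
      · exact Or.inr ht
    calc ν U ≤ ν ((⋃ n, U ∩ D n) ∪ {ω | ¬ Tendsto (fun n => τ n ω) atTop atTop}) :=
          measure_mono hcover
      _ ≤ ν (⋃ n, U ∩ D n) + ν {ω | ¬ Tendsto (fun n => τ n ω) atTop atTop} :=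
          measure_union_le _ _
      _ ≤ ENNReal.ofReal ε + 0 := add_le_add hmeasU (le_of_eq hνN)
      _ = ENNReal.ofReal ε := add_zero _
  -- Step C : countable union over all rationals < r, via directed finsets
  set s : Finset ℚ≥0 → Set Ω := fun F =>
    ⋃ q ∈ F.filter (fun q : ℚ≥0 => (q : NNReal) < r), {ω | Y (q : NNReal) ω ≤ ε} with hs
  have hdir : Directed (· ⊆ ·) s := by
    refine Monotone.directed_le fun F1 F2 h12 => ?_
    exact Set.iUnion₂_mono' fun q hq => ⟨q, Finset.filter_subset_filter _ h12 hq, subset_rfl⟩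
  have hcup : (⋃ q : ℚ≥0, ⋃ (_ : (q : NNReal) < r), {ω | Y (q : NNReal) ω ≤ ε}) = ⋃ F, s F := by
    apply Set.Subset.antisymm
    · refine Set.iUnion₂_subset fun q hq => ?_
      refine Set.subset_iUnion_of_subset {q} ?_
      refine Set.subset_iUnion₂_of_subset q ?_ subset_rfl
      simp [hq]
    · refine Set.iUnion_subset fun F => Set.iUnion₂_subset fun q hq => ?_
      rw [Finset.mem_filter] at hq
      exact Set.subset_iUnion₂_of_subset q hq.2 subset_rfl
  haveI : Countable ℚ≥0 := NNRat.coe_injective.countable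
  haveI : Countable (Finset ℚ≥0) := Finset.countable
  rw [hcup, hdir.measure_iUnion]
  refine iSup_le fun F => stepB _ ?_
  intro q hq
  rw [Finset.mem_filter] at hq
  exact hq.2.le

lemma keyD (μ : Measure Ω) [IsProbabilityMeasure μ] (ℱ : Filtration NNReal m)
    (Y : NNReal → Ω → ℝ) (hY0 : ∀ t ω, 0 ≤ Y t ω) (hYadapted : Adapted ℱ Y)
    (τ : ℕ → Ω → NNReal) (hτstop : ∀ n, IsStoppingTime ℱ (fun ω => (τ n ω : WithTop NNReal)))
    (hτmart : ∀ n, Martingale (MeasureTheory.stoppedProcess Y (fun ω => (τ n ω : WithTop NNReal))) ℱ μ)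
    (hτtend : ∀ᵐ ω ∂μ, Tendsto (fun n => τ n ω) atTop atTop)
    (r : NNReal) :
    ∀ᵐ ω ∂μ, (∀ k : ℕ, ∃ q : ℚ≥0, (q : NNReal) < r ∧ Y (q : NNReal) ω ≤ 1 / (k + 1)) →
      Y r ω = 0 := by
  classical
  haveI : Countable ℚ≥0 := NNRat.coe_injective.countable
  set ν := μ.withDensity (fun ω => ENNReal.ofReal (Y r ω)) with hν
  have hYmeas : ∀ t : NNReal, Measurable (Y t) := fun t =>
    (hYadapted t).mono (ℱ.le t) le_rfl
  set W : ℕ → Set Ω := fun k =>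
    ⋃ q : ℚ≥0, ⋃ (_ : (q : NNReal) < r), {ω | Y (q : NNReal) ω ≤ 1 / (k + 1)} with hW
  have hWmeas : ∀ k, MeasurableSet (W k) := by
    intro k
    refine MeasurableSet.iUnion fun q => MeasurableSet.iUnion fun _ => ?_
    exact hYmeas _ measurableSet_Iic
  have hWbound : ∀ k, ν (W k) ≤ ENNReal.ofReal (1 / (k + 1)) := fun k =>
    keyC μ ℱ Y hY0 hYadapted τ hτstop hτmart hτtend r
      (by positivity : (0:ℝ) < 1 / (k + 1))
  have hWcap : ν (⋂ k, W k) = 0 := by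
    refine le_antisymm ?_ zero_le
    have htend : Tendsto (fun k : ℕ => ENNReal.ofReal (1 / (k + 1))) atTop (nhds 0) := by
      have := ENNReal.tendsto_ofReal (tendsto_one_div_add_atTop_nhds_zero_nat)
      simpa using this
    refine ge_of_tendsto htend (Filter.Eventually.of_forall fun k => ?_)
    exact le_trans (measure_mono (Set.iInter_subset _ k)) (hWbound k)
  have hint : ∫⁻ ω in (⋂ k, W k), ENNReal.ofReal (Y r ω) ∂μ = 0 := by
    rw [← withDensity_apply _ (MeasurableSet.iInter hWmeas)]
    exact hWcap
  have hae : (fun ω => ENNReal.ofReal (Y r ω)) =ᵐ[μ.restrict (⋂ k, W k)] 0 :=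
    (lintegral_eq_zero_iff (ENNReal.measurable_ofReal.comp (hYmeas r))).1 hint
  rw [Filter.EventuallyEq, ae_restrict_iff' (MeasurableSet.iInter hWmeas)] at hae
  filter_upwards [hae] with ω hω hyp
  have hωW : ω ∈ ⋂ k, W k := by
    refine Set.mem_iInter.2 fun k => ?_
    obtain ⟨q, hq1, hq2⟩ := hyp k
    exact Set.mem_iUnion.2 ⟨q, Set.mem_iUnion.2 ⟨hq1, hq2⟩⟩
  have := hω hωW
  simp only [Pi.zero_apply, ENNReal.ofReal_eq_zero] at this
  exact le_antisymm this (hY0 r ω)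

/-- Local martingale (index set `ℝ≥0`) via a localizing sequence of stopping times. -/
def IsLocalMartingale (ℱ : Filtration NNReal m) (μ : Measure Ω) (Z : NNReal → Ω → ℝ) : Prop :=
  ∃ τ : ℕ → Ω → NNReal, (∀ n, IsStoppingTime ℱ (fun ω => (τ n ω : WithTop NNReal))) ∧
    (∀ n, Martingale (MeasureTheory.stoppedProcess Z (fun ω => (τ n ω : WithTop NNReal))) ℱ μ) ∧
    ∀ᵐ ω ∂μ, Tendsto (fun n => τ n ω) atTop atTop

theorem stmt9 (μ : Measure Ω) [IsProbabilityMeasure μ] (ℱ : Filtration NNReal m)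
    (X Z : NNReal → Ω → ℝ) (b : ℝ)
    (hXcont : ∀ ω, Continuous fun t => X t ω)
    (hXadapted : Adapted ℱ X)
    (hZpos : ∀ t ω, 0 < Z t ω)
    (hZright : ∀ ω t, ContinuousWithinAt (fun s => Z s ω) (Ici t) t)
    (hZsuper : Supermartingale Z ℱ μ)
    (hLM : IsLocalMartingale ℱ μ (fun t ω => Z t ω * |X t ω - b|)) :
    ∀ᵐ ω ∂μ, ∀ s t : NNReal, s ≤ t → X s ω = b → X t ω = b := by
  classical
  haveI : Countable ℚ≥0 := NNRat.coe_injective.countable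
  set Y : NNReal → Ω → ℝ := fun t ω => Z t ω * |X t ω - b| with hY
  have hY0 : ∀ t ω, 0 ≤ Y t ω := fun t ω => mul_nonneg (hZpos t ω).le (abs_nonneg _)
  have habsSM : ∀ t : NNReal, StronglyMeasurable[ℱ t] fun ω => |X t ω - b| := by
    intro t
    have h : (fun ω => |X t ω - b|) = fun ω => ‖X t ω - b‖ := by
      funext ω; rw [Real.norm_eq_abs]
    rw [h]
    exact ((hXadapted t).stronglyMeasurable.sub stronglyMeasurable_const).norm
  have hYadapted : Adapted ℱ Y := fun t => ((hZsuper.stronglyAdapted t).mul (habsSM t)).measurable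
  obtain ⟨τ, hτstop, hτmart, hτtend⟩ := hLM
  have key : ∀ᵐ ω ∂μ, ∀ ρ : ℚ≥0,
      (∀ k : ℕ, ∃ q : ℚ≥0, (q : NNReal) < (ρ : NNReal) ∧ Y (q : NNReal) ω ≤ 1 / (k + 1)) →
      Y (ρ : NNReal) ω = 0 :=
    ae_all_iff.2 fun ρ => keyD μ ℱ Y hY0 hYadapted τ hτstop hτmart hτtend (ρ : NNReal)
  filter_upwards [key] with ω hω
  intro s t hst hXs
  by_contra hne
  have hc : 0 < |X t ω - b| := abs_pos.2 (sub_ne_zero.2 hne)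
  have hcont : Continuous fun u : NNReal => |X u ω - b| := ((hXcont ω).sub continuous_const).abs
  have hev : ∀ᶠ u in nhds t, |X t ω - b| / 2 < |X u ω - b| :=
    hcont.continuousAt.eventually (eventually_gt_nhds (half_lt_self hc))
  obtain ⟨δ, hδ, hball⟩ := Metric.eventually_nhds_iff.1 hev
  obtain ⟨ρ, hρ1, hρ2⟩ := exists_nnrat_btwn' t hδ
  have hdist : dist ((ρ : NNReal)) t < δ := by
    rw [NNReal.dist_eq, abs_of_nonneg (sub_nonneg.2 (NNReal.coe_le_coe.2 hρ1.le))]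
    linarith
  have hbig : |X t ω - b| / 2 < |X (ρ : NNReal) ω - b| := hball hdist
  -- show X ρ ω = b, contradiction
  have hYρ : Y (ρ : NNReal) ω = 0 := by
    refine hω ρ fun k => ?_
    have hYs0 : Y s ω = 0 := by simp [hY, hXs]
    have hYrc : ContinuousWithinAt (fun u => Y u ω) (Ici s) s :=
      (hZright ω s).mul (((hXcont ω).sub continuous_const).abs.continuousWithinAt)
    have hYrc0 : Tendsto (fun u => Y u ω) (nhdsWithin s (Ici s)) (nhds 0) := by
      rw [← hYs0]; exact hYrc
    have hevY : ∀ᶠ u in nhdsWithin s (Ici s), Y u ω < 1 / (k + 1) :=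
      hYrc0.eventually (eventually_lt_nhds (by positivity))
    have hevρ : ∀ᶠ u in nhdsWithin s (Ici s), u < (ρ : NNReal) := by
      refine mem_nhdsWithin_of_mem_nhds (Iio_mem_nhds (lt_of_le_of_lt hst hρ1))
    obtain ⟨η, hη, hset⟩ := (Metric.nhdsWithin_basis_ball.eventually_iff).1 (hevY.and hevρ)
    obtain ⟨q, hq1, hq2⟩ := exists_nnrat_btwn' s hη
    have hqmem : (q : NNReal) ∈ Metric.ball s η ∩ Ici s := by
      constructor
      · rw [Metric.mem_ball, NNReal.dist_eq,
          abs_of_nonneg (sub_nonneg.2 (NNReal.coe_le_coe.2 hq1.le))]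
        linarith
      · exact hq1.le
    obtain ⟨hYq, hqρ⟩ := hset hqmem
    exact ⟨q, hqρ, hYq.le⟩
  have habs : |X (ρ : NNReal) ω - b| = 0 := by
    rcases mul_eq_zero.1 hYρ with h | h
    · exact absurd h (hZpos _ ω).ne'
    · exact h
  rw [habs] at hbig
  linarith
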